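/- For any process P and sets X, I ⊆ A, θ_X(τ_I(P)) is strongly bisimilar to θ_X(τ_I(θ_{X∪I}(P))). -/

import Mathlib

/-- Actions of an LTS with time-outs. -/
inductive Act (A : Type*) where
  | vis (a : A)
  | tau
  | to

variable {A : Type*} {Proc : Type*}

/-- `Idle Tr P X` expresses `I(P) ∩ (X ∪ {τ}) = ∅`. -/
def Idle (Tr : Proc → Act A → Proc → Prop) (P : Proc) (X : Set A) : Prop :=
  (∀ a ∈ X, ∀ P', ¬ Tr P (Act.vis a) P') ∧ (∀ P', ¬ Tr P Act.tau P')

/-- The state space is closed under environment operators `θ_X`, whose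
transitions are exactly those generated by the three operational rules. -/
def ThetaSpec (Tr : Proc → Act A → Proc → Prop) (theta : Set A → Proc → Proc) : Prop :=
  ∀ (X : Set A) (P : Proc) (α : Act A) (Q : Proc),
    Tr (theta X P) α Q ↔
      ((α = Act.tau ∧ ∃ P', Tr P Act.tau P' ∧ Q = theta X P') ∨
       (∃ a, α = Act.vis a ∧ a ∈ X ∧ Tr P α Q) ∨
       (α ≠ Act.tau ∧ Idle Tr P X ∧ Tr P α Q))

/-- A strong time-out bisimulation. -/
def IsSTB (Tr : Proc → Act A → Proc → Prop) (theta : Set A → Proc → Proc)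
    (B : Proc → Proc → Prop) : Prop :=
  (∀ P Q, B P Q → B Q P) ∧
  (∀ P Q (α : Act A) P', B P Q → α ≠ Act.to → Tr P α P' →
      ∃ Q', Tr Q α Q' ∧ B P' Q') ∧
  (∀ P Q (X : Set A) P', B P Q → Idle Tr P X → Tr P Act.to P' →
      ∃ Q', Tr Q Act.to Q' ∧ B (theta X P') (theta X Q'))

/-- Strong reactive bisimilarity, characterised as the largest strong
time-out bisimulation. -/
def RBisimT (Tr : Proc → Act A → Proc → Prop) (theta : Set A → Proc → Proc)
    (P Q : Proc) : Prop :=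
  ∃ B, IsSTB Tr theta B ∧ B P Q

/-- A strong bisimulation (treating `τ` and `t` like any other action). -/
def IsSB (Tr : Proc → Act A → Proc → Prop) (B : Proc → Proc → Prop) : Prop :=
  (∀ P Q, B P Q → B Q P) ∧
  (∀ P Q (α : Act A) P', B P Q → Tr P α P' → ∃ Q', Tr Q α Q' ∧ B P' Q')

/-- Strong bisimilarity. -/
def SBisim (Tr : Proc → Act A → Proc → Prop) (P Q : Proc) : Prop :=
  ∃ B, IsSB Tr B ∧ B P Q

/-- Transitions of the CCSP abstraction operator `τ_I` are exactly those
generated by its two operational rules. -/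
def HideSpec (Tr : Proc → Act A → Proc → Prop)
    (hideOp : Set A → Proc → Proc) : Prop :=
  ∀ (I : Set A) (P : Proc) (α : Act A) (Q : Proc),
    Tr (hideOp I P) α Q ↔
      ((∀ a, α = Act.vis a → a ∉ I) ∧ ∃ P', Tr P α P' ∧ Q = hideOp I P') ∨
      (α = Act.tau ∧ ∃ a ∈ I, ∃ P', Tr P (Act.vis a) P' ∧ Q = hideOp I P')

/-- `θ_X(τ_I(P)) ↔ θ_X(τ_I(θ_{X∪I}(P)))`. -/
theorem theta_hide (Tr : Proc → Act A → Proc → Prop)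
    (theta : Set A → Proc → Proc) (hideOp : Set A → Proc → Proc)
    (hθ : ThetaSpec Tr theta) (hhide : HideSpec Tr hideOp)
    (P : Proc) (X I : Set A) :
    SBisim Tr (theta X (hideOp I P)) (theta X (hideOp I (theta (X ∪ I) P))) := by
  classical
  -- convenient constructors
  have hθ1 : ∀ (S : Set A) (p p' : Proc), Tr p Act.tau p' →
      Tr (theta S p) Act.tau (theta S p') := by
    intro S p p' h
    exact (hθ S p Act.tau (theta S p')).mpr (Or.inl ⟨rfl, p', h, rfl⟩)
  have hθ2 : ∀ (S : Set A) (p : Proc) (a : A) (q : Proc), a ∈ S →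
      Tr p (Act.vis a) q → Tr (theta S p) (Act.vis a) q := by
    intro S p a q ha h
    exact (hθ S p (Act.vis a) q).mpr (Or.inr (Or.inl ⟨a, rfl, ha, h⟩))
  have hθ3 : ∀ (S : Set A) (p : Proc) (α : Act A) (q : Proc), α ≠ Act.tau →
      Idle Tr p S → Tr p α q → Tr (theta S p) α q := by
    intro S p α q hne hid h
    exact (hθ S p α q).mpr (Or.inr (Or.inr ⟨hne, hid, h⟩))
  have hh1 : ∀ (p : Proc) (α : Act A) (q : Proc), (∀ a, α = Act.vis a → a ∉ I) →
      Tr p α q → Tr (hideOp I p) α (hideOp I q) := by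
    intro p α q hni h
    exact (hhide I p α (hideOp I q)).mpr (Or.inl ⟨hni, q, h, rfl⟩)
  have hh2 : ∀ (p : Proc) (b : A) (q : Proc), b ∈ I →
      Tr p (Act.vis b) q → Tr (hideOp I p) Act.tau (hideOp I q) := by
    intro p b q hb h
    exact (hhide I p Act.tau (hideOp I q)).mpr (Or.inr ⟨rfl, b, hb, q, h, rfl⟩)
  -- Idle transfer lemmas
  have idle_theta : ∀ (p : Proc), Idle Tr p (X ∪ I) →
      Idle Tr (theta (X ∪ I) p) (X ∪ I) := by
    intro p h
    constructor
    · intro a ha q hTr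
      rcases (hθ (X ∪ I) p (Act.vis a) q).mp hTr with
        ⟨h1, _⟩ | ⟨b, hb, hbS, hT⟩ | ⟨_, _, hT⟩
      · exact nomatch h1
      · cases hb; exact h.1 a ha q hT
      · exact h.1 a ha q hT
    · intro q hTr
      rcases (hθ (X ∪ I) p Act.tau q).mp hTr with
        ⟨_, p', hT, _⟩ | ⟨b, hb, _, _⟩ | ⟨hne, _, _⟩
      · exact h.2 p' hT
      · exact nomatch hb
      · exact hne rfl
  have idle_theta' : ∀ (p : Proc), Idle Tr (theta (X ∪ I) p) (X ∪ I) →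
      Idle Tr p (X ∪ I) := by
    intro p h
    constructor
    · intro a ha q hTr
      exact h.1 a ha q (hθ2 (X ∪ I) p a q ha hTr)
    · intro q hTr
      exact h.2 (theta (X ∪ I) q) (hθ1 (X ∪ I) p q hTr)
  have idle_hide : ∀ (p : Proc), Idle Tr p (X ∪ I) →
      Idle Tr (hideOp I p) X := by
    intro p h
    constructor
    · intro a ha q hTr
      rcases (hhide I p (Act.vis a) q).mp hTr with
        ⟨hni, p', hT, _⟩ | ⟨h1, _⟩
      · exact h.1 a (Or.inl ha) p' hT
      · exact nomatch h1
    · intro q hTr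
      rcases (hhide I p Act.tau q).mp hTr with
        ⟨_, p', hT, _⟩ | ⟨_, b, hb, p', hT, _⟩
      · exact h.2 p' hT
      · exact h.1 b (Or.inr hb) p' hT
  have idle_hide' : ∀ (p : Proc), Idle Tr (hideOp I p) X →
      Idle Tr p (X ∪ I) := by
    intro p h
    constructor
    · intro a ha q hTr
      rcases Classical.em (a ∈ I) with hI | hI
      · exact h.2 (hideOp I q) (hh2 p a q hI hTr)
      · rcases ha with hX | hI'
        · exact h.1 a hX (hideOp I q)
            (hh1 p (Act.vis a) q (by intro b hb; cases hb; exact hI) hTr)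
        · exact absurd hI' hI
    · intro q hTr
      exact h.2 (hideOp I q) (hh1 p Act.tau q (by intro b hb; exact nomatch hb) hTr)
  -- the candidate bisimulation
  set L : Proc → Proc := fun p => theta X (hideOp I p) with hL
  set R : Proc → Proc := fun p => theta X (hideOp I (theta (X ∪ I) p)) with hR
  set B : Proc → Proc → Prop := fun u v =>
    u = v ∨ (∃ p, u = L p ∧ v = R p) ∨ (∃ p, v = L p ∧ u = R p) with hB
  have mem_eq : ∀ u, B u u := fun u => Or.inl rfl
  have mem_LR : ∀ p, B (L p) (R p) := fun p => Or.inr (Or.inl ⟨p, rfl, rfl⟩)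
  have mem_RL : ∀ p, B (R p) (L p) := fun p => Or.inr (Or.inr ⟨p, rfl, rfl⟩)
  -- forward simulation: moves of L p are matched by R p
  have fwd : ∀ (p : Proc) (α : Act A) (q : Proc), Tr (L p) α q →
      ∃ q', Tr (R p) α q' ∧ B q q' := by
    intro p α q hTr
    rcases (hθ X (hideOp I p) α q).mp hTr with
      ⟨rfl, q₁, hτ, rfl⟩ | ⟨a, rfl, haX, hT⟩ | ⟨hne, hid, hT⟩
    · -- τ-move of θ_X
      rcases (hhide I p Act.tau q₁).mp hτ with
        ⟨_, p', hp', rfl⟩ | ⟨_, b, hbI, p', hp', rfl⟩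
      · -- P → τ P'
        refine ⟨R p', ?_, mem_LR p'⟩
        exact hθ1 X _ _ (hh1 _ Act.tau _ (fun b hb => nomatch hb)
          (hθ1 (X ∪ I) p p' hp'))
      · -- P → b P', b ∈ I
        refine ⟨L p', ?_, mem_eq _⟩
        exact hθ1 X _ _ (hh2 _ b _ hbI (hθ2 (X ∪ I) p b p' (Or.inr hbI) hp'))
    · -- visible move, a ∈ X
      rcases (hhide I p (Act.vis a) q).mp hT with
        ⟨hni, p', hp', rfl⟩ | ⟨h1, _⟩
      · have haI : a ∉ I := hni a rfl
        refine ⟨hideOp I p', ?_, mem_eq _⟩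
        exact hθ2 X _ a _ haX
          (hh1 _ (Act.vis a) _ (fun b hb => by cases hb; exact haI)
            (hθ2 (X ∪ I) p a p' (Or.inl haX) hp'))
      · exact nomatch h1
    · -- α ≠ τ, Idle
      have hidP : Idle Tr p (X ∪ I) := idle_hide' p hid
      rcases (hhide I p α q).mp hT with
        ⟨hni, p', hp', rfl⟩ | ⟨h1, _⟩
      · refine ⟨hideOp I p', ?_, mem_eq _⟩
        exact hθ3 X _ α _ hne (idle_hide _ (idle_theta p hidP))
          (hh1 _ α _ hni (hθ3 (X ∪ I) p α p' hne hidP hp'))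
      · exact absurd h1 hne
  -- backward simulation: moves of R p are matched by L p
  have bwd : ∀ (p : Proc) (α : Act A) (q : Proc), Tr (R p) α q →
      ∃ q', Tr (L p) α q' ∧ B q q' := by
    intro p α q hTr
    rcases (hθ X (hideOp I (theta (X ∪ I) p)) α q).mp hTr with
      ⟨rfl, q₁, hτ, rfl⟩ | ⟨a, rfl, haX, hT⟩ | ⟨hne, hid, hT⟩
    · rcases (hhide I (theta (X ∪ I) p) Act.tau q₁).mp hτ with
        ⟨_, q₀, hq₀, rfl⟩ | ⟨_, b, hbI, q₀, hq₀, rfl⟩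
      · -- θ_{X∪I} p → τ q₀
        rcases (hθ (X ∪ I) p Act.tau q₀).mp hq₀ with
          ⟨_, p', hp', rfl⟩ | ⟨b, hb, _, _⟩ | ⟨hne, _, _⟩
        · exact ⟨L p', hθ1 X _ _ (hh1 _ Act.tau _
            (fun b hb => nomatch hb) hp'), mem_RL p'⟩
        · exact nomatch hb
        · exact absurd rfl hne
      · -- θ_{X∪I} p → b q₀, b ∈ I
        rcases (hθ (X ∪ I) p (Act.vis b) q₀).mp hq₀ with
          ⟨h1, _⟩ | ⟨c, hc, _, hp'⟩ | ⟨_, hidP, hp'⟩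
        · exact nomatch h1
        · cases hc
          exact ⟨L q₀, hθ1 X _ _ (hh2 _ b _ hbI hp'), mem_eq _⟩
        · exact absurd hp' (hidP.1 b (Or.inr hbI) q₀)
    · -- visible move, a ∈ X
      rcases (hhide I (theta (X ∪ I) p) (Act.vis a) q).mp hT with
        ⟨hni, q₀, hq₀, rfl⟩ | ⟨h1, _⟩
      · have haI : a ∉ I := hni a rfl
        rcases (hθ (X ∪ I) p (Act.vis a) q₀).mp hq₀ with
          ⟨h1, _⟩ | ⟨c, hc, _, hp'⟩ | ⟨_, hidP, hp'⟩
        · exact nomatch h1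
        · cases hc
          exact ⟨hideOp I q₀, hθ2 X _ a _ haX
            (hh1 _ (Act.vis a) _ (fun b hb => by cases hb; exact haI) hp'), mem_eq _⟩
        · exact absurd hp' (hidP.1 a (Or.inl haX) q₀)
      · exact nomatch h1
    · -- α ≠ τ, Idle
      have hidP : Idle Tr p (X ∪ I) := idle_theta' p (idle_hide' _ hid)
      rcases (hhide I (theta (X ∪ I) p) α q).mp hT with
        ⟨hni, q₀, hq₀, rfl⟩ | ⟨h1, _⟩
      · rcases (hθ (X ∪ I) p α q₀).mp hq₀ with
          ⟨h1, _⟩ | ⟨c, hc, hcS, hp'⟩ | ⟨_, _, hp'⟩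
        · exact absurd h1 hne
        · exact absurd hp' (by cases hc; exact hidP.1 c hcS q₀)
        · exact ⟨hideOp I q₀, hθ3 X _ α _ hne (idle_hide p hidP)
            (hh1 _ α _ hni hp'), mem_eq _⟩
      · exact absurd h1 hne
  refine ⟨B, ⟨?_, ?_⟩, mem_LR P⟩
  · rintro u v (rfl | ⟨p, rfl, rfl⟩ | ⟨p, rfl, rfl⟩)
    · exact mem_eq u
    · exact mem_RL p
    · exact mem_LR p
  · rintro u v α u' (rfl | ⟨p, rfl, rfl⟩ | ⟨p, rfl, rfl⟩) hT
    · exact ⟨u', hT, mem_eq u'⟩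
    · exact fwd p α u' hT
    · exact bwd p α u' hT
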